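/- Let (ν_t)_{t≥0} be a weakly continuous map into M_1(𝒰) satisfying the mild-form mean-field equation for every φ ∈ C_b(𝒰), and suppose that for every s ≥ 0 and 1 ≤ n ≤ C the restriction of ν_s to 𝒰_n is absolutely continuous with respect to Lebesgue measure on [0,∞)^n. Then the mild-form equation also holds when the test function φ is the indicator function of a closed rectangle {(n,l_1,…,l_n) ∈ 𝒰_n : 0 ≤ l_i ≤ y_i for all i}, for any 1 ≤ n ≤ C and any y ∈ [0,∞)^n, as well as when φ is the indicator of {0}. -/

import Mathlib

open MeasureTheory Filter Set
open scoped NNReal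

noncomputable section

/-- The server-state space `𝒰`: an occupancy `n : ℕ` together with the ages (in `[0,∞)`)
of the `n` jobs in service.  (Statements restrict attention to measures supported on
occupancies `n ≤ C`.) -/
abbrev SState : Type := Σ n : ℕ, (Fin n → ℝ≥0)

namespace MFModel

/-- The set `𝒰_n` of states with occupancy exactly `n`. -/
def level (n : ℕ) : Set SState := {u | u.1 = n}

/-- The empty state `0 ∈ 𝒰_0`. -/
def emptyState : SState := ⟨0, fun i => i.elim0⟩

/-- The state `(1,0)`: a single job of age `0`. -/
def oneZero : SState := ⟨1, fun _ => 0⟩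

/-- `ν` is a probability measure concentrated on `𝒰 = ⋃_{n ≤ C} 𝒰_n`. -/
def MemM1 (C : ℕ) (ν : Measure SState) : Prop :=
  IsProbabilityMeasure ν ∧ ν {u : SState | u.1 ≤ C} = 1

/-- `R̄_n(ν) = Σ_{m=n}^C ν(𝒰_m)` (so that `R̄_{C+1}(ν) = 0`). -/
def Rbar (C : ℕ) (ν : Measure SState) (n : ℕ) : ℝ :=
  ∑ m ∈ Finset.Icc n C, (ν (level m)).toReal

/-- `Φ_n(ν) = Σ_{k=0}^{d-1} R̄_n(ν)^k R̄_{n+1}(ν)^{d-1-k}`, the divided power difference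
`(R̄_n^d − R̄_{n+1}^d)/(R̄_n − R̄_{n+1})`. -/
def Phi (C d : ℕ) (ν : Measure SState) (n : ℕ) : ℝ :=
  ∑ k ∈ Finset.range d, (Rbar C ν n) ^ k * (Rbar C ν (n + 1)) ^ (d - 1 - k)

/-- The restriction of `ν` to the level `𝒰_n`, viewed as a measure on the ages. -/
def fiber (ν : Measure SState) (n : ℕ) : Measure (Fin n → ℝ≥0) :=
  Measure.comap (fun x : Fin n → ℝ≥0 => (⟨n, x⟩ : SState)) ν

/-- The restriction of `ν` to the level `𝒰_n`, as a measure on `[0,∞)^n ⊆ ℝ^n`. -/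
def fiberReal (ν : Measure SState) (n : ℕ) : Measure (Fin n → ℝ) :=
  Measure.map (fun (x : Fin n → ℝ≥0) (i : Fin n) => (x i : ℝ)) (fiber ν n)

/-- The pairing `⟨ν, φ⟩ = ∫_𝒰 φ dν`. -/
def pair (ν : Measure SState) (φ : SState → ℝ) : ℝ := ∫ u, φ u ∂ν

/-- The age shift `τ_y^+` on states (`y` a real number, truncated at `0`). -/
def shift (y : ℝ) (u : SState) : SState := ⟨u.1, fun i => u.2 i + Real.toNNReal y⟩

/-- `φ ∈ C_b(𝒰)`: bounded continuous. -/
def IsCb (φ : SState → ℝ) : Prop := Continuous φ ∧ ∃ M, ∀ u, |φ u| ≤ M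

/-- `φ ∈ C_b^1(𝒰)` with partial-derivative family `D`: `φ` is bounded continuous, and on
each level the partial derivatives (one-sided at the boundary of `[0,∞)`) exist, are
continuous and are bounded; `D n i x` is `∂φ(n,x)/∂x_i`. -/
def IsCb1 (φ : SState → ℝ) (D : (n : ℕ) → Fin n → (Fin n → ℝ≥0) → ℝ) : Prop :=
  IsCb φ ∧
  (∀ n (i : Fin n), Continuous (D n i)) ∧
  (∃ M, ∀ n (i : Fin n) x, |D n i x| ≤ M) ∧
  (∀ n (i : Fin n) (x : Fin n → ℝ≥0),
    HasDerivWithinAt (fun y : ℝ => φ ⟨n, Function.update x i (Real.toNNReal y)⟩)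
      (D n i x) (Set.Ici (0 : ℝ)) ((x i : ℝ)))

/-- `φ' = Σ_i ∂φ/∂x_i`, built from the partial-derivative family `D`. -/
def sumDeriv (D : (n : ℕ) → Fin n → (Fin n → ℝ≥0) → ℝ) (u : SState) : ℝ :=
  ∑ i : Fin u.1, D u.1 i u.2

/-- The drift functional `B[φ](ν)` of the mean-field model. -/
def drift (C d : ℕ) (lam : ℝ) (β : ℝ≥0 → ℝ) (φ : SState → ℝ) (ν : Measure SState) : ℝ :=
  (∑ n ∈ Finset.range C, ∑ j : Fin (n + 1),
    ∫ x : Fin (n + 1) → ℝ≥0,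
      β (x j) * (φ ⟨n, x ∘ j.succAbove⟩ - φ ⟨n + 1, x⟩) ∂(fiber ν (n + 1)))
  + lam * ((ν (level 0)).toReal * Phi C d ν 0 * (φ oneZero - φ emptyState)
      + ∑ n ∈ Finset.Icc 1 (C - 1), (Phi C d ν n / (n + 1)) *
          ∑ j : Fin (n + 1),
            ∫ x : Fin n → ℝ≥0, (φ ⟨n + 1, j.insertNth 0 x⟩ - φ ⟨n, x⟩) ∂(fiber ν n))

/-- Weak continuity of a path of measures on `[0,∞)`. -/
def WeaklyContinuous (ν : ℝ → Measure SState) : Prop :=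
  ∀ f : BoundedContinuousFunction SState ℝ,
    ContinuousOn (fun t => ∫ u, f u ∂(ν t)) (Set.Ici (0 : ℝ))

/-- The weak-form mean-field equation for the test function `φ` with derivative family `D`. -/
def WeakEq (C d : ℕ) (lam : ℝ) (β : ℝ≥0 → ℝ) (ν : ℝ → Measure SState)
    (φ : SState → ℝ) (D : (n : ℕ) → Fin n → (Fin n → ℝ≥0) → ℝ) : Prop :=
  ∀ t ≥ (0 : ℝ),
    pair (ν t) φ = pair (ν 0) φ + (∫ s in (0 : ℝ)..t, pair (ν s) (sumDeriv D))
      + ∫ s in (0 : ℝ)..t, drift C d lam β φ (ν s)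

/-- The mild-form mean-field equation for the test function `φ`. -/
def MildEq (C d : ℕ) (lam : ℝ) (β : ℝ≥0 → ℝ) (ν : ℝ → Measure SState)
    (φ : SState → ℝ) : Prop :=
  ∀ t ≥ (0 : ℝ),
    pair (ν t) φ = pair (ν 0) (fun u => φ (shift t u))
      + ∫ s in (0 : ℝ)..t, drift C d lam β (fun u => φ (shift (t - s) u)) (ν s)

/-- A mean-field model solution: a weakly continuous path of probability measures on `𝒰`
solving the weak-form equation for every `C_b^1` test function. -/
def IsMFSolution (C d : ℕ) (lam : ℝ) (β : ℝ≥0 → ℝ) (ν : ℝ → Measure SState) : Prop :=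
  (∀ t ≥ (0 : ℝ), MemM1 C (ν t)) ∧ WeaklyContinuous ν ∧
  ∀ (φ : SState → ℝ) (D : (n : ℕ) → Fin n → (Fin n → ℝ≥0) → ℝ),
    IsCb1 φ D → WeakEq C d lam β ν φ D

/-- A mild solution: weakly continuous path of probability measures on `𝒰` solving
the mild-form equation for every `C_b` test function. -/
def IsMildSolution (C d : ℕ) (lam : ℝ) (β : ℝ≥0 → ℝ) (ν : ℝ → Measure SState) : Prop :=
  (∀ t ≥ (0 : ℝ), MemM1 C (ν t)) ∧ WeaklyContinuous ν ∧
  ∀ φ : SState → ℝ, IsCb φ → MildEq C d lam β ν φ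

/-- The total-variation style norm `‖ν¹ − ν²‖ = sup_{‖φ‖_∞ ≤ 1, φ ∈ C_b} |⟨ν¹,φ⟩ − ⟨ν²,φ⟩|`. -/
def measDist (μ₁ μ₂ : Measure SState) : ℝ :=
  ⨆ φ : {φ : BoundedContinuousFunction SState ℝ // ‖φ‖ ≤ 1},
    |(∫ u, φ.1 u ∂μ₁) - ∫ u, φ.1 u ∂μ₂|

end MFModel
end

noncomputable section
open scoped Classical
namespace MFModel

/-! ### Measurable structure of the state space -/

def smk (m : ℕ) : (Fin m → ℝ≥0) → SState := fun x => ⟨m, x⟩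

lemma measurableSet_sstate_iff {s : Set SState} :
    MeasurableSet s ↔ ∀ m : ℕ, MeasurableSet (smk m ⁻¹' s) := by
  show MeasurableSet[⨅ m, MeasurableSpace.map (Sigma.mk m) _] s ↔ _
  rw [MeasurableSpace.measurableSet_iInf]; rfl

lemma measurable_smk (m : ℕ) : Measurable (smk m) := Measurable.of_le_map (iInf_le _ m)

lemma smk_injective (m : ℕ) : Function.Injective (smk m) :=
  @sigma_mk_injective ℕ (fun n => Fin n → ℝ≥0) m

lemma measurableEmbedding_smk (m : ℕ) : MeasurableEmbedding (smk m) := by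
  refine ⟨smk_injective m, measurable_smk m, fun s hs => ?_⟩
  rw [measurableSet_sstate_iff]
  intro k
  by_cases h : k = m
  · subst h
    rwa [Set.preimage_image_eq _ (smk_injective k)]
  · have : smk k ⁻¹' (smk m '' s) = ∅ := by
      ext x; simp only [Set.mem_preimage, Set.mem_image, Set.mem_empty_iff_false, iff_false]
      rintro ⟨x', _, he⟩
      exact h (congrArg Sigma.fst he).symm
    rw [this]; exact MeasurableSet.empty

lemma continuous_smk (m : ℕ) : Continuous (smk m) :=
  @continuous_sigmaMk ℕ (fun n => Fin n → ℝ≥0) _ m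

instance : OpensMeasurableSpace SState := by
  constructor
  show MeasurableSpace.generateFrom {s | IsOpen s} ≤ _
  refine MeasurableSpace.generateFrom_le fun s hs => ?_
  rw [measurableSet_sstate_iff]
  intro m
  exact (hs.preimage (continuous_smk m)).measurableSet

/-! ### Extension of a function on a level to the whole space -/

def extF (m : ℕ) (F : (Fin m → ℝ≥0) → ℝ) : SState → ℝ := fun u =>
  if h : u.1 = m then F (h ▸ u.2) else 0

lemma extF_mk_eq (m : ℕ) (F : (Fin m → ℝ≥0) → ℝ) (x : Fin m → ℝ≥0) :
    extF m F ⟨m, x⟩ = F x := by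
  show (if h : m = m then F (h ▸ x) else 0) = F x
  rw [dif_pos rfl]

lemma extF_mk_ne {m k : ℕ} (h : k ≠ m) (F : (Fin m → ℝ≥0) → ℝ) (x : Fin k → ℝ≥0) :
    extF m F ⟨k, x⟩ = 0 := dif_neg h

lemma extF_continuous {m : ℕ} {F : (Fin m → ℝ≥0) → ℝ} (hF : Continuous F) :
    Continuous (extF m F) := by
  apply continuous_sigma
  intro k
  by_cases h : k = m
  · subst h
    have : (fun a : Fin k → ℝ≥0 => extF k F ⟨k, a⟩) = F := funext fun a => extF_mk_eq k F a
    rw [this]; exact hF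
  · have : (fun a : Fin k → ℝ≥0 => extF m F ⟨k, a⟩) = fun _ => 0 :=
      funext fun a => extF_mk_ne h F a
    rw [this]; exact continuous_const

lemma extF_abs_le {m : ℕ} {F : (Fin m → ℝ≥0) → ℝ} {M : ℝ} (hM : 0 ≤ M)
    (hF : ∀ x, |F x| ≤ M) (u : SState) : |extF m F u| ≤ M := by
  rcases u with ⟨k, x⟩
  by_cases h : k = m
  · subst h; rw [extF_mk_eq]; exact hF x
  · rw [extF_mk_ne h]; simpa using hM

lemma range_smk (m : ℕ) : Set.range (smk m) = level m := by
  ext u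
  constructor
  · rintro ⟨x, rfl⟩; rfl
  · rintro h
    rcases u with ⟨k, x⟩
    cases h
    exact ⟨x, rfl⟩

lemma measurableSet_level (m : ℕ) : MeasurableSet (level m) := by
  rw [← range_smk]; exact (measurableEmbedding_smk m).measurableSet_range

lemma indicator_extF (m : ℕ) (F : (Fin m → ℝ≥0) → ℝ) :
    (level m).indicator (extF m F) = extF m F := by
  funext u
  rcases u with ⟨k, x⟩
  by_cases h : k = m
  · subst h
    rw [Set.indicator_apply, if_pos (show (⟨k, x⟩ : SState) ∈ level k from rfl)]
  · rw [Set.indicator_apply, if_neg (show (⟨k, x⟩ : SState) ∉ level m from fun hm => h hm),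
      extF_mk_ne h]

lemma integral_fiber (ν : Measure SState) (m : ℕ) (F : (Fin m → ℝ≥0) → ℝ) :
    ∫ x, F x ∂(fiber ν m) = ∫ u, extF m F u ∂ν := by
  have he := measurableEmbedding_smk m
  have h1 : ∫ u, extF m F u ∂(Measure.map (smk m) (fiber ν m))
      = ∫ x, extF m F (smk m x) ∂(fiber ν m) := he.integral_map _
  have h2 : Measure.map (smk m) (fiber ν m) = ν.restrict (level m) := by
    have h0 : fiber ν m = Measure.comap (smk m) ν := rfl
    rw [h0, he.map_comap, range_smk]
  rw [h2] at h1
  have h3 : ∫ u, extF m F u ∂(ν.restrict (level m)) = ∫ u, extF m F u ∂ν := by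
    rw [← integral_indicator (measurableSet_level m), indicator_extF]
  rw [← h3, h1]
  exact integral_congr_ae (Filter.Eventually.of_forall fun x => (extF_mk_eq m F x).symm)

lemma extF_one_eq_indicator (m : ℕ) :
    extF m (fun _ => (1:ℝ)) = (level m).indicator (fun _ => (1:ℝ)) := by
  funext u
  rcases u with ⟨k, x⟩
  by_cases h : k = m
  · subst h
    rw [extF_mk_eq, Set.indicator_apply, if_pos (show (⟨k, x⟩ : SState) ∈ level k from rfl)]
  · rw [extF_mk_ne h, Set.indicator_apply,
      if_neg (show (⟨k, x⟩ : SState) ∉ level m from fun hm => h hm)]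

lemma toReal_level_eq (ν : Measure SState) (m : ℕ) :
    (ν (level m)).toReal = ∫ u, extF m (fun _ => (1:ℝ)) u ∂ν := by
  rw [extF_one_eq_indicator, integral_indicator (measurableSet_level m)]
  simp
  rfl

/-! ### Integration helpers -/

lemma integrable_of_bounded {f : SState → ℝ} {M : ℝ} (μ : Measure SState) [IsFiniteMeasure μ]
    (hc : Continuous f) (hb : ∀ u, |f u| ≤ M) : Integrable f μ :=
  (integrable_const M).mono' hc.aestronglyMeasurable
    (Filter.Eventually.of_forall fun u => by simpa using hb u)

lemma abs_integral_le {f : SState → ℝ} {M : ℝ} (μ : Measure SState) [IsProbabilityMeasure μ]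
    (hb : ∀ u, |f u| ≤ M) : |∫ u, f u ∂μ| ≤ M := by
  have := norm_integral_le_of_norm_le_const (μ := μ) (f := f) (C := M)
    (Filter.Eventually.of_forall fun u => by simpa using hb u)
  simpa [measure_univ] using this

lemma tendsto_integral_fiber (ν : Measure SState) [IsProbabilityMeasure ν] (m : ℕ)
    {F : ℕ → (Fin m → ℝ≥0) → ℝ} {G : (Fin m → ℝ≥0) → ℝ} {M : ℝ} (hM : 0 ≤ M)
    (hc : ∀ k, Continuous (F k)) (hb : ∀ k x, |F k x| ≤ M)
    (hlim : ∀ x, Filter.Tendsto (fun k => F k x) Filter.atTop (nhds (G x))) :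
    Filter.Tendsto (fun k => ∫ x, F k x ∂(fiber ν m)) Filter.atTop
      (nhds (∫ x, G x ∂(fiber ν m))) := by
  simp only [integral_fiber]
  refine tendsto_integral_of_dominated_convergence (fun _ => M)
    (fun k => (extF_continuous (hc k)).aestronglyMeasurable) (integrable_const M)
    (fun k => Filter.Eventually.of_forall fun u => by
      simpa using extF_abs_le hM (hb k) u)
    (Filter.Eventually.of_forall fun u => ?_)
  rcases u with ⟨km, x⟩
  by_cases h : km = m
  · subst h
    simp only [extF_mk_eq]
    exact hlim x
  · simp only [extF_mk_ne h]
    exact tendsto_const_nhds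

/-! ### Bounds on `Rbar`, `Phi` and the drift -/

lemma Rbar_nonneg (C : ℕ) (ν : Measure SState) (m : ℕ) : 0 ≤ Rbar C ν m :=
  Finset.sum_nonneg fun _ _ => ENNReal.toReal_nonneg

lemma toReal_level_le_one (ν : Measure SState) [IsProbabilityMeasure ν] (s : Set SState) :
    (ν s).toReal ≤ 1 := by
  have h : (ν s).toReal ≤ (ν Set.univ).toReal :=
    ENNReal.toReal_mono (measure_ne_top ν _) (measure_mono (Set.subset_univ _))
  simpa [measure_univ] using h

lemma Rbar_le (C : ℕ) (ν : Measure SState) [IsProbabilityMeasure ν] (m : ℕ) :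
    Rbar C ν m ≤ (C : ℝ) + 1 := by
  calc Rbar C ν m ≤ (Finset.Icc m C).card • (1:ℝ) :=
        Finset.sum_le_card_nsmul _ _ _ (fun i _ => toReal_level_le_one ν _)
    _ = ((Finset.Icc m C).card : ℝ) := by simp
    _ ≤ (C : ℝ) + 1 := by
        rw [Nat.card_Icc]
        exact_mod_cast Nat.sub_le (C + 1) m

lemma Phi_abs_le (C d : ℕ) (ν : Measure SState) [IsProbabilityMeasure ν] (m : ℕ) :
    |Phi C d ν m| ≤ (d : ℝ) * ((C : ℝ) + 1) ^ (d - 1) := by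
  have h1 : ∀ i, (0:ℝ) ≤ Rbar C ν i := Rbar_nonneg C ν
  have h2 : ∀ i, Rbar C ν i ≤ (C : ℝ) + 1 := Rbar_le C ν
  have hterm : ∀ k ∈ Finset.range d,
      (Rbar C ν m) ^ k * (Rbar C ν (m+1)) ^ (d - 1 - k) ≤ ((C : ℝ) + 1) ^ (d - 1) := by
    intro k hk
    have hk' : k + (d - 1 - k) = d - 1 := by
      have := Finset.mem_range.mp hk; omega
    calc (Rbar C ν m) ^ k * (Rbar C ν (m+1)) ^ (d - 1 - k)
        ≤ ((C : ℝ) + 1) ^ k * ((C : ℝ) + 1) ^ (d - 1 - k) := by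
          apply mul_le_mul (pow_le_pow_left₀ (h1 m) (h2 m) k)
            (pow_le_pow_left₀ (h1 (m+1)) (h2 (m+1)) _)
            (pow_nonneg (h1 (m+1)) _) (pow_nonneg (by positivity) _)
      _ = ((C : ℝ) + 1) ^ (d - 1) := by rw [← pow_add, hk']
  have hpos : ∀ k ∈ Finset.range d,
      (0:ℝ) ≤ (Rbar C ν m) ^ k * (Rbar C ν (m+1)) ^ (d - 1 - k) := fun k _ =>
    mul_nonneg (pow_nonneg (h1 m) _) (pow_nonneg (h1 (m+1)) _)
  have habs : |Phi C d ν m| = Phi C d ν m := abs_of_nonneg (Finset.sum_nonneg hpos)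
  rw [habs]
  calc Phi C d ν m ≤ (Finset.range d).card • (((C : ℝ) + 1) ^ (d - 1)) :=
        Finset.sum_le_card_nsmul _ _ _ hterm
    _ = (d : ℝ) * ((C : ℝ) + 1) ^ (d - 1) := by
        simp [nsmul_eq_mul]

lemma drift_abs_le (C d : ℕ) (lam : ℝ) (β : ℝ≥0 → ℝ) {Mβ : ℝ} (hβ : ∀ x, |β x| ≤ Mβ)
    (φ : SState → ℝ) (hφ : ∀ u, |φ u| ≤ 1) (ν : Measure SState) [IsProbabilityMeasure ν] :
    |drift C d lam β φ ν| ≤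
      2 * Mβ * (C:ℝ)^2 + |lam| * (2 * ((d : ℝ) * ((C : ℝ) + 1) ^ (d - 1))
        + (C:ℝ) * (2 * ((d : ℝ) * ((C : ℝ) + 1) ^ (d - 1)))) := by
  set K : ℝ := (d : ℝ) * ((C : ℝ) + 1) ^ (d - 1) with hK
  have hMβ0 : 0 ≤ Mβ := le_trans (abs_nonneg _) (hβ 0)
  have hK0 : 0 ≤ K := by positivity
  have habs2 : ∀ p q : SState, |φ p - φ q| ≤ 2 := fun p q =>
    (abs_sub _ _).trans (by have := hφ p; have := hφ q; linarith)
  have hI1 : ∀ (n : ℕ) (j : Fin (n+1)),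
      |∫ x : Fin (n+1) → ℝ≥0,
        β (x j) * (φ ⟨n, x ∘ j.succAbove⟩ - φ ⟨n + 1, x⟩) ∂(fiber ν (n+1))| ≤ 2 * Mβ := by
    intro n j
    rw [integral_fiber]
    refine abs_integral_le ν (extF_abs_le (by positivity) (fun x => ?_))
    calc |β (x j) * (φ ⟨n, x ∘ j.succAbove⟩ - φ ⟨n + 1, x⟩)|
        = |β (x j)| * |φ ⟨n, x ∘ j.succAbove⟩ - φ ⟨n + 1, x⟩| := abs_mul _ _
      _ ≤ Mβ * 2 := mul_le_mul (hβ _) (habs2 _ _) (abs_nonneg _) hMβ0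
      _ = 2 * Mβ := by ring
  have hsum1 : |∑ n ∈ Finset.range C, ∑ j : Fin (n + 1),
      ∫ x : Fin (n + 1) → ℝ≥0,
        β (x j) * (φ ⟨n, x ∘ j.succAbove⟩ - φ ⟨n + 1, x⟩) ∂(fiber ν (n + 1))|
      ≤ 2 * Mβ * (C:ℝ)^2 := by
    calc |∑ n ∈ Finset.range C, ∑ j : Fin (n + 1), _| ≤
        ∑ n ∈ Finset.range C, |∑ j : Fin (n + 1),
          ∫ x : Fin (n + 1) → ℝ≥0,
            β (x j) * (φ ⟨n, x ∘ j.succAbove⟩ - φ ⟨n + 1, x⟩) ∂(fiber ν (n + 1))| :=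
        Finset.abs_sum_le_sum_abs _ _
      _ ≤ ∑ n ∈ Finset.range C, (C:ℝ) * (2 * Mβ) := by
          refine Finset.sum_le_sum fun n hn => ?_
          have hcard : ((n:ℝ) + 1) ≤ (C:ℝ) := by
            exact_mod_cast Nat.succ_le_of_lt (Finset.mem_range.mp hn)
          calc |∑ j : Fin (n + 1), _| ≤ ∑ j : Fin (n + 1), |∫ x : Fin (n + 1) → ℝ≥0,
                β (x j) * (φ ⟨n, x ∘ j.succAbove⟩ - φ ⟨n + 1, x⟩) ∂(fiber ν (n + 1))| :=
              Finset.abs_sum_le_sum_abs _ _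
            _ ≤ (Finset.univ : Finset (Fin (n+1))).card • (2 * Mβ) :=
              Finset.sum_le_card_nsmul _ _ _ (fun j _ => hI1 n j)
            _ = ((n:ℝ) + 1) * (2 * Mβ) := by
              simp [nsmul_eq_mul]
            _ ≤ (C:ℝ) * (2 * Mβ) := by
              apply mul_le_mul_of_nonneg_right hcard (by positivity)
      _ = (C:ℝ) * ((C:ℝ) * (2 * Mβ)) := by
          rw [Finset.sum_const, Finset.card_range, nsmul_eq_mul]
      _ = 2 * Mβ * (C:ℝ)^2 := by ring
  have hJ : ∀ (n : ℕ) (j : Fin (n+1)),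
      |∫ x : Fin n → ℝ≥0, (φ ⟨n + 1, j.insertNth 0 x⟩ - φ ⟨n, x⟩) ∂(fiber ν n)| ≤ 2 := by
    intro n j
    rw [integral_fiber]
    exact abs_integral_le ν (extF_abs_le (by norm_num) (fun x => habs2 _ _))
  have hT1 : |(ν (level 0)).toReal * Phi C d ν 0 * (φ oneZero - φ emptyState)| ≤ 2 * K := by
    rw [abs_mul, abs_mul]
    calc |(ν (level 0)).toReal| * |Phi C d ν 0| * |φ oneZero - φ emptyState|
        ≤ 1 * K * 2 := by
          apply mul_le_mul _ (habs2 _ _) (abs_nonneg _) (by positivity)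
          apply mul_le_mul _ (Phi_abs_le C d ν 0) (abs_nonneg _) zero_le_one
          rw [abs_of_nonneg ENNReal.toReal_nonneg]
          exact toReal_level_le_one ν _
      _ = 2 * K := by ring
  have hT2 : |∑ n ∈ Finset.Icc 1 (C - 1), (Phi C d ν n / (n + 1)) *
      ∑ j : Fin (n + 1),
        ∫ x : Fin n → ℝ≥0, (φ ⟨n + 1, j.insertNth 0 x⟩ - φ ⟨n, x⟩) ∂(fiber ν n)|
      ≤ (C:ℝ) * (2 * K) := by
    calc |∑ n ∈ Finset.Icc 1 (C - 1), _| ≤ ∑ n ∈ Finset.Icc 1 (C - 1),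
          |(Phi C d ν n / (n + 1)) * ∑ j : Fin (n + 1),
            ∫ x : Fin n → ℝ≥0, (φ ⟨n + 1, j.insertNth 0 x⟩ - φ ⟨n, x⟩) ∂(fiber ν n)| :=
        Finset.abs_sum_le_sum_abs _ _
      _ ≤ ∑ n ∈ Finset.Icc 1 (C - 1), 2 * K := by
          refine Finset.sum_le_sum fun n _ => ?_
          have hn1 : (0:ℝ) < (n:ℝ) + 1 := by positivity
          rw [abs_mul]
          have hA : |Phi C d ν n / ((n:ℝ) + 1)| ≤ K / ((n:ℝ) + 1) := by
            rw [abs_div, abs_of_pos hn1]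
            exact (div_le_div_iff_of_pos_right hn1).mpr (Phi_abs_le C d ν n)
          have hB : |∑ j : Fin (n + 1),
              ∫ x : Fin n → ℝ≥0, (φ ⟨n + 1, j.insertNth 0 x⟩ - φ ⟨n, x⟩) ∂(fiber ν n)|
              ≤ ((n:ℝ) + 1) * 2 := by
            calc |∑ j : Fin (n + 1), _| ≤ ∑ j : Fin (n + 1),
                |∫ x : Fin n → ℝ≥0, (φ ⟨n + 1, j.insertNth 0 x⟩ - φ ⟨n, x⟩) ∂(fiber ν n)| :=
                Finset.abs_sum_le_sum_abs _ _
              _ ≤ (Finset.univ : Finset (Fin (n+1))).card • (2:ℝ) :=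
                Finset.sum_le_card_nsmul _ _ _ (fun j _ => hJ n j)
              _ = ((n:ℝ) + 1) * 2 := by simp [nsmul_eq_mul]
          calc |Phi C d ν n / ((n:ℝ) + 1)| * |∑ j : Fin (n + 1),
                ∫ x : Fin n → ℝ≥0, (φ ⟨n + 1, j.insertNth 0 x⟩ - φ ⟨n, x⟩) ∂(fiber ν n)|
              ≤ (K / ((n:ℝ) + 1)) * (((n:ℝ) + 1) * 2) :=
                mul_le_mul hA hB (abs_nonneg _) (by positivity)
            _ = 2 * K := by field_simp
      _ ≤ (C:ℝ) * (2 * K) := by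
          rw [Finset.sum_const, nsmul_eq_mul]
          apply mul_le_mul_of_nonneg_right _ (by positivity)
          rw [Nat.card_Icc]
          exact_mod_cast Nat.cast_le.mpr (show C - 1 + 1 - 1 ≤ C by omega)
  unfold drift
  calc |(∑ n ∈ Finset.range C, ∑ j : Fin (n + 1),
        ∫ x : Fin (n + 1) → ℝ≥0,
          β (x j) * (φ ⟨n, x ∘ j.succAbove⟩ - φ ⟨n + 1, x⟩) ∂(fiber ν (n + 1)))
      + lam * ((ν (level 0)).toReal * Phi C d ν 0 * (φ oneZero - φ emptyState)
        + ∑ n ∈ Finset.Icc 1 (C - 1), (Phi C d ν n / (n + 1)) *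
            ∑ j : Fin (n + 1),
              ∫ x : Fin n → ℝ≥0, (φ ⟨n + 1, j.insertNth 0 x⟩ - φ ⟨n, x⟩) ∂(fiber ν n))|
      ≤ |∑ n ∈ Finset.range C, ∑ j : Fin (n + 1),
        ∫ x : Fin (n + 1) → ℝ≥0,
          β (x j) * (φ ⟨n, x ∘ j.succAbove⟩ - φ ⟨n + 1, x⟩) ∂(fiber ν (n + 1))|
      + |lam| * (|(ν (level 0)).toReal * Phi C d ν 0 * (φ oneZero - φ emptyState)|
        + |∑ n ∈ Finset.Icc 1 (C - 1), (Phi C d ν n / (n + 1)) *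
            ∑ j : Fin (n + 1),
              ∫ x : Fin n → ℝ≥0, (φ ⟨n + 1, j.insertNth 0 x⟩ - φ ⟨n, x⟩) ∂(fiber ν n)|) := by
        refine (abs_add_le _ _).trans (add_le_add_right ?_ _)
        rw [abs_mul]
        exact mul_le_mul_of_nonneg_left (abs_add_le _ _) (abs_nonneg lam)
    _ ≤ 2 * Mβ * (C:ℝ)^2 + |lam| * (2 * K + (C:ℝ) * (2 * K)) :=
        add_le_add hsum1 (mul_le_mul_of_nonneg_left (add_le_add hT1 hT2) (abs_nonneg lam))

/-! ### Continuity in time of integrals against the path -/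

lemma cont_pair {C : ℕ} {ν : ℝ → Measure SState}
    (hM1 : ∀ s ≥ (0:ℝ), MemM1 C (ν s)) (hw : WeaklyContinuous ν)
    (g : ℝ → SState → ℝ) (M L : ℝ) (hL : 0 ≤ L)
    (hgc : ∀ s, Continuous (g s))
    (hgb : ∀ s u, |g s u| ≤ M)
    (hlip : ∀ s s' u, |g s u - g s' u| ≤ L * |s - s'|) :
    ContinuousOn (fun s => ∫ u, g s u ∂(ν s)) (Set.Ici 0) := by
  rw [Metric.continuousOn_iff]
  intro s₀ hs₀ ε hε
  set G₀ : BoundedContinuousFunction SState ℝ :=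
    BoundedContinuousFunction.ofNormedAddCommGroup (g s₀) (hgc s₀) M
      (fun u => by simpa using hgb s₀ u) with hG₀def
  have hcont := hw G₀
  rw [Metric.continuousOn_iff] at hcont
  obtain ⟨δ₁, hδ₁, hδ₁'⟩ := hcont s₀ hs₀ (ε/2) (by linarith)
  refine ⟨min δ₁ (ε/(2*(L+1))), lt_min hδ₁ (by positivity), fun a ha hd => ?_⟩
  haveI := (hM1 a ha).1
  haveI := (hM1 s₀ hs₀).1
  have h2 : dist (∫ u, g s₀ u ∂(ν a)) (∫ u, g s₀ u ∂(ν s₀)) < ε/2 :=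
    hδ₁' a ha (lt_of_lt_of_le hd (min_le_left _ _))
  have hint1 : Integrable (g a) (ν a) := integrable_of_bounded (ν a) (hgc a) (hgb a)
  have hint2 : Integrable (g s₀) (ν a) := integrable_of_bounded (ν a) (hgc s₀) (hgb s₀)
  have h1 : dist (∫ u, g a u ∂(ν a)) (∫ u, g s₀ u ∂(ν a)) ≤ ε/2 := by
    rw [Real.dist_eq, ← integral_sub hint1 hint2]
    have hb : ∀ᵐ u ∂(ν a), ‖g a u - g s₀ u‖ ≤ L * |a - s₀| :=
      Filter.Eventually.of_forall fun u => by simpa using hlip a s₀ u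
    have hnorm := norm_integral_le_of_norm_le_const (μ := ν a) hb
    have h3 : L * |a - s₀| ≤ ε/2 := by
      have hda : |a - s₀| ≤ ε/(2*(L+1)) := by
        have : dist a s₀ < ε/(2*(L+1)) := lt_of_lt_of_le hd (min_le_right _ _)
        rw [Real.dist_eq] at this
        exact this.le
      have h4 : L * |a - s₀| ≤ L * (ε/(2*(L+1))) :=
        mul_le_mul_of_nonneg_left hda hL
      have h5 : L * (ε/(2*(L+1))) ≤ (L+1) * (ε/(2*(L+1))) :=
        mul_le_mul_of_nonneg_right (by linarith) (by positivity)
      have h6 : (L+1) * (ε/(2*(L+1))) = ε/2 := by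
        field_simp
      linarith
    calc |∫ u, (g a u - g s₀ u) ∂(ν a)| ≤ L * |a - s₀| * ((ν a) Set.univ).toReal := hnorm
      _ = L * |a - s₀| := by simp [measure_univ]
      _ ≤ ε/2 := h3
  calc dist (∫ u, g a u ∂(ν a)) (∫ u, g s₀ u ∂(ν s₀))
      ≤ dist (∫ u, g a u ∂(ν a)) (∫ u, g s₀ u ∂(ν a))
        + dist (∫ u, g s₀ u ∂(ν a)) (∫ u, g s₀ u ∂(ν s₀)) := dist_triangle _ _ _
    _ < ε/2 + ε/2 := add_lt_add_of_le_of_lt h1 h2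
    _ = ε := by ring

lemma cont_level {C : ℕ} {ν : ℝ → Measure SState}
    (hM1 : ∀ s ≥ (0:ℝ), MemM1 C (ν s)) (hw : WeaklyContinuous ν) (m : ℕ) :
    ContinuousOn (fun s => ((ν s) (level m)).toReal) (Set.Ici 0) := by
  have h := cont_pair hM1 hw (fun _ => extF m (fun _ => (1:ℝ))) 1 0 le_rfl
    (fun _ => extF_continuous continuous_const)
    (fun _ u => extF_abs_le zero_le_one (fun _ => by simp) u)
    (fun s s' u => by simp)
  exact h.congr fun s hs => toReal_level_eq (ν s) m

lemma cont_Rbar {C : ℕ} {ν : ℝ → Measure SState}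
    (hM1 : ∀ s ≥ (0:ℝ), MemM1 C (ν s)) (hw : WeaklyContinuous ν) (m : ℕ) :
    ContinuousOn (fun s => Rbar C (ν s) m) (Set.Ici 0) :=
  continuousOn_finset_sum _ fun i _ => cont_level hM1 hw i

lemma cont_Phi {C d : ℕ} {ν : ℝ → Measure SState}
    (hM1 : ∀ s ≥ (0:ℝ), MemM1 C (ν s)) (hw : WeaklyContinuous ν) (m : ℕ) :
    ContinuousOn (fun s => Phi C d (ν s) m) (Set.Ici 0) :=
  continuousOn_finset_sum _ fun k _ =>
    ((cont_Rbar hM1 hw m).pow k).mul ((cont_Rbar hM1 hw (m+1)).pow _)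

lemma continuous_shift (a : ℝ) : Continuous (shift a) := by
  apply continuous_sigma
  intro m
  exact (continuous_smk m).comp (continuous_pi fun i => (continuous_apply i).add continuous_const)

lemma continuous_shift_param (u : SState) : Continuous (fun a : ℝ => shift a u) :=
  (continuous_smk u.1).comp (continuous_pi fun i => continuous_const.add continuous_real_toNNReal)

lemma drift_shift_continuousOn {C d : ℕ} {lam : ℝ} {β : ℝ≥0 → ℝ} {ν : ℝ → Measure SState}
    (hM1 : ∀ s ≥ (0:ℝ), MemM1 C (ν s)) (hw : WeaklyContinuous ν)
    (hβc : Continuous β) {Mβ : ℝ} (hβ : ∀ x, |β x| ≤ Mβ)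
    (φ : SState → ℝ) (hφc : Continuous φ) (hφb : ∀ u, |φ u| ≤ 1)
    {L : ℝ} (hL : 0 ≤ L)
    (hlip : ∀ a b u, |φ (shift a u) - φ (shift b u)| ≤ L * |a - b|)
    (t : ℝ) :
    ContinuousOn (fun s => drift C d lam β (fun u => φ (shift (t - s) u)) (ν s))
      (Set.Ici 0) := by
  have hMβ0 : 0 ≤ Mβ := le_trans (abs_nonneg _) (hβ 0)
  have habs2 : ∀ p q : SState, |φ p - φ q| ≤ 2 := fun p q =>
    (abs_sub _ _).trans (by have := hφb p; have := hφb q; linarith)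
  have hshiftdiff : ∀ (s s' : ℝ) (u : SState),
      |φ (shift (t - s) u) - φ (shift (t - s') u)| ≤ L * |s - s'| := by
    intro s s' u
    have := hlip (t - s) (t - s') u
    have he : |(t - s) - (t - s')| = |s - s'| := by
      rw [show (t - s) - (t - s') = -(s - s') by ring, abs_neg]
    rwa [he] at this
  unfold drift
  simp only [integral_fiber]
  apply ContinuousOn.add
  · refine continuousOn_finset_sum _ fun n _ => continuousOn_finset_sum _ fun j _ => ?_
    refine cont_pair hM1 hw
      (fun s => extF (n+1) (fun x =>
        β (x j) * (φ (shift (t - s) ⟨n, x ∘ j.succAbove⟩) - φ (shift (t - s) ⟨n + 1, x⟩))))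
      (2 * Mβ) (Mβ * (2 * L)) (by positivity) (fun s => ?_) (fun s u => ?_) (fun s s' u => ?_)
    · refine extF_continuous ?_
      exact (hβc.comp (continuous_apply j)).mul
        (((hφc.comp (continuous_shift (t - s))).comp
            ((continuous_smk n).comp (continuous_pi fun i => continuous_apply (j.succAbove i)))).sub
          ((hφc.comp (continuous_shift (t - s))).comp (continuous_smk (n+1))))
    · refine extF_abs_le (by positivity) (fun x => ?_) u
      calc |β (x j) * (φ (shift (t - s) ⟨n, x ∘ j.succAbove⟩) - φ (shift (t - s) ⟨n + 1, x⟩))|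
          = |β (x j)| * |φ (shift (t - s) ⟨n, x ∘ j.succAbove⟩) - φ (shift (t - s) ⟨n + 1, x⟩)| :=
            abs_mul _ _
        _ ≤ Mβ * 2 := mul_le_mul (hβ _) (habs2 _ _) (abs_nonneg _) hMβ0
        _ = 2 * Mβ := by ring
    · rcases u with ⟨k, x⟩
      by_cases h : k = n + 1
      · subst h
        simp only [extF_mk_eq]
        set p : SState := ⟨_, x ∘ j.succAbove⟩
        set q : SState := (⟨_, x⟩ : SState)
        calc |β (x j) * (φ (shift (t - s) p) - φ (shift (t - s) q))
              - β (x j) * (φ (shift (t - s') p) - φ (shift (t - s') q))|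
            = |β (x j)| * |(φ (shift (t - s) p) - φ (shift (t - s') p))
              - (φ (shift (t - s) q) - φ (shift (t - s') q))| := by
              rw [← abs_mul]; congr 1; ring
          _ ≤ Mβ * (L * |s - s'| + L * |s - s'|) := by
              refine mul_le_mul (hβ _) ?_ (abs_nonneg _) hMβ0
              exact (abs_sub _ _).trans
                (add_le_add (hshiftdiff s s' p) (hshiftdiff s s' q))
          _ = Mβ * (2 * L) * |s - s'| := by ring
      · simp only [extF_mk_ne h, sub_self, abs_zero]
        positivity
  · refine ContinuousOn.mul continuousOn_const (ContinuousOn.add ?_ ?_)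
    · refine (((cont_level hM1 hw 0).mul (cont_Phi hM1 hw 0)).mul ?_)
      refine Continuous.continuousOn ?_
      exact ((hφc.comp ((continuous_shift_param oneZero).comp
          (continuous_const.sub continuous_id))).sub
        (hφc.comp ((continuous_shift_param emptyState).comp
          (continuous_const.sub continuous_id))))
    · refine continuousOn_finset_sum _ fun n _ => ?_
      refine (ContinuousOn.div_const (cont_Phi hM1 hw n) _).mul
        (continuousOn_finset_sum _ fun j _ => ?_)
      refine cont_pair hM1 hw
        (fun s => extF n (fun x =>
          φ (shift (t - s) ⟨n + 1, j.insertNth 0 x⟩) - φ (shift (t - s) ⟨n, x⟩)))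
        2 (2 * L) (by positivity) (fun s => ?_) (fun s u => ?_) (fun s s' u => ?_)
      · refine extF_continuous ?_
        exact ((hφc.comp (continuous_shift (t - s))).comp
            ((continuous_smk (n+1)).comp (continuous_const.finInsertNth j continuous_id))).sub
          ((hφc.comp (continuous_shift (t - s))).comp (continuous_smk n))
      · exact extF_abs_le (by norm_num) (fun x => habs2 _ _) u
      · rcases u with ⟨k, x⟩
        by_cases h : k = n
        · subst h
          simp only [extF_mk_eq]
          set p : SState := (⟨_ + 1, j.insertNth 0 x⟩ : SState)
          set q : SState := (⟨_, x⟩ : SState)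
          calc |(φ (shift (t - s) p) - φ (shift (t - s) q))
                - (φ (shift (t - s') p) - φ (shift (t - s') q))|
              = |(φ (shift (t - s) p) - φ (shift (t - s') p))
                - (φ (shift (t - s) q) - φ (shift (t - s') q))| := by congr 1; ring
            _ ≤ L * |s - s'| + L * |s - s'| := (abs_sub _ _).trans
                (add_le_add (hshiftdiff s s' p) (hshiftdiff s s' q))
            _ = 2 * L * |s - s'| := by ring
        · simp only [extF_mk_ne h, sub_self, abs_zero]
          positivity

/-! ### Convergence of the drift under pointwise approximation -/

lemma drift_tendsto (C d : ℕ) (lam : ℝ) (β : ℝ≥0 → ℝ) (hβc : Continuous β)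
    {Mβ : ℝ} (hβ : ∀ x, |β x| ≤ Mβ)
    (ν : Measure SState) [IsProbabilityMeasure ν]
    (f : ℕ → SState → ℝ) (g : SState → ℝ)
    (hc : ∀ k, Continuous (f k)) (hb : ∀ k u, |f k u| ≤ 1)
    (hlim : ∀ u, Filter.Tendsto (fun k => f k u) Filter.atTop (nhds (g u))) :
    Filter.Tendsto (fun k => drift C d lam β (f k) ν) Filter.atTop
      (nhds (drift C d lam β g ν)) := by
  have hMβ0 : 0 ≤ Mβ := le_trans (abs_nonneg _) (hβ 0)
  have habs2 : ∀ (k : ℕ) (p q : SState), |f k p - f k q| ≤ 2 := fun k p q =>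
    (abs_sub _ _).trans (by have := hb k p; have := hb k q; linarith)
  unfold drift
  refine Filter.Tendsto.add ?_ ?_
  · refine tendsto_finset_sum _ fun n _ => tendsto_finset_sum _ fun j _ => ?_
    refine tendsto_integral_fiber ν (n+1) (F := fun k x =>
        β (x j) * (f k ⟨n, x ∘ j.succAbove⟩ - f k ⟨n + 1, x⟩))
      (M := 2 * Mβ) (by positivity) (fun k => ?_) (fun k x => ?_) (fun x => ?_)
    · exact (hβc.comp (continuous_apply j)).mul
        (((hc k).comp ((continuous_smk n).comp
            (continuous_pi fun i => continuous_apply (j.succAbove i)))).sub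
          ((hc k).comp (continuous_smk (n+1))))
    · calc |β (x j) * (f k ⟨n, x ∘ j.succAbove⟩ - f k ⟨n + 1, x⟩)|
          = |β (x j)| * |f k ⟨n, x ∘ j.succAbove⟩ - f k ⟨n + 1, x⟩| := abs_mul _ _
        _ ≤ Mβ * 2 := mul_le_mul (hβ _) (habs2 k _ _) (abs_nonneg _) hMβ0
        _ = 2 * Mβ := by ring
    · exact Filter.Tendsto.const_mul _ ((hlim _).sub (hlim _))
  · refine Filter.Tendsto.const_mul lam (Filter.Tendsto.add ?_ ?_)
    · exact Filter.Tendsto.const_mul _ ((hlim oneZero).sub (hlim emptyState))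
    · refine tendsto_finset_sum _ fun n _ => ?_
      refine Filter.Tendsto.const_mul _ (tendsto_finset_sum _ fun j _ => ?_)
      refine tendsto_integral_fiber ν n (F := fun k x =>
          f k ⟨n + 1, j.insertNth 0 x⟩ - f k ⟨n, x⟩) (M := 2) (by norm_num)
        (fun k => ?_) (fun k x => habs2 k _ _) (fun x => (hlim _).sub (hlim _))
      exact ((hc k).comp ((continuous_smk (n+1)).comp
          (continuous_const.finInsertNth j continuous_id))).sub
        ((hc k).comp (continuous_smk n))

/-! ### The mild equation passes to pointwise limits of test functions -/

lemma mildEq_of_approx {C d : ℕ} {lam : ℝ} {β : ℝ≥0 → ℝ} {ν : ℝ → Measure SState}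
    (hsol : IsMildSolution C d lam β ν) (hβc : Continuous β)
    {Mβ : ℝ} (hβ : ∀ x, |β x| ≤ Mβ)
    (φ : SState → ℝ) (φk : ℕ → SState → ℝ)
    (hc : ∀ k, Continuous (φk k)) (hb : ∀ k u, |φk k u| ≤ 1)
    (hlips : ∀ k, ∃ L, 0 ≤ L ∧ ∀ a b u, |φk k (shift a u) - φk k (shift b u)| ≤ L * |a - b|)
    (hlim : ∀ u, Filter.Tendsto (fun k => φk k u) Filter.atTop (nhds (φ u))) :
    MildEq C d lam β ν φ := by
  obtain ⟨hM1, hw, hmild⟩ := hsol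
  intro t ht
  have eqk : ∀ k, pair (ν t) (φk k) = pair (ν 0) (fun u => φk k (shift t u))
      + ∫ s in (0:ℝ)..t, drift C d lam β (fun u => φk k (shift (t - s) u)) (ν s) :=
    fun k => hmild (φk k) ⟨hc k, 1, hb k⟩ t ht
  haveI h0 := (hM1 0 le_rfl).1
  haveI ht' := (hM1 t ht).1
  have h1 : Filter.Tendsto (fun k => pair (ν t) (φk k)) Filter.atTop
      (nhds (pair (ν t) φ)) := by
    simp only [pair]
    exact tendsto_integral_of_dominated_convergence (fun _ => 1)
      (fun k => (hc k).aestronglyMeasurable) (integrable_const 1)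
      (fun k => Filter.Eventually.of_forall fun u => by simpa using hb k u)
      (Filter.Eventually.of_forall hlim)
  have h2 : Filter.Tendsto (fun k => pair (ν 0) (fun u => φk k (shift t u))) Filter.atTop
      (nhds (pair (ν 0) (fun u => φ (shift t u)))) := by
    simp only [pair]
    exact tendsto_integral_of_dominated_convergence (fun _ => 1)
      (fun k => ((hc k).comp (continuous_shift t)).aestronglyMeasurable) (integrable_const 1)
      (fun k => Filter.Eventually.of_forall fun u => by simpa using hb k (shift t u))
      (Filter.Eventually.of_forall fun u => hlim (shift t u))
  set B : ℝ := 2 * Mβ * (C:ℝ)^2 + |lam| * (2 * ((d : ℝ) * ((C : ℝ) + 1) ^ (d - 1))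
    + (C:ℝ) * (2 * ((d : ℝ) * ((C : ℝ) + 1) ^ (d - 1)))) with hB
  haveI : IsFiniteMeasure ((volume : Measure ℝ).restrict (Set.Ioc 0 t)) :=
    ⟨by rw [Measure.restrict_apply_univ]; exact measure_Ioc_lt_top⟩
  have h3 : Filter.Tendsto
      (fun k => ∫ s in (0:ℝ)..t, drift C d lam β (fun u => φk k (shift (t - s) u)) (ν s))
      Filter.atTop
      (nhds (∫ s in (0:ℝ)..t, drift C d lam β (fun u => φ (shift (t - s) u)) (ν s))) := by
    simp only [intervalIntegral.integral_of_le ht]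
    refine tendsto_integral_of_dominated_convergence (fun _ => B)
      (fun k => ?_) (integrable_const B) (fun k => ?_) ?_
    · obtain ⟨L, hL0, hLk⟩ := hlips k
      exact ((drift_shift_continuousOn hM1 hw hβc hβ (φk k) (hc k) (hb k) hL0 hLk t).mono
        (fun s hs => le_of_lt hs.1)).aestronglyMeasurable measurableSet_Ioc
    · refine (ae_restrict_mem measurableSet_Ioc).mono fun s hs => ?_
      haveI := (hM1 s hs.1.le).1
      have := drift_abs_le C d lam β hβ (fun u => φk k (shift (t - s) u))
        (fun u => hb k _) (ν s)
      simpa using this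
    · refine (ae_restrict_mem measurableSet_Ioc).mono fun s hs => ?_
      haveI := (hM1 s hs.1.le).1
      exact drift_tendsto C d lam β hβc hβ (ν s)
        (fun k u => φk k (shift (t - s) u)) (fun u => φ (shift (t - s) u))
        (fun k => (hc k).comp (continuous_shift (t - s)))
        (fun k u => hb k _) (fun u => hlim (shift (t - s) u))
  exact tendsto_nhds_unique h1 ((h2.add h3).congr fun k => (eqk k).symm)

/-! ### Ramp approximations of rectangle indicators -/

def ramp (k : ℕ) (a x : ℝ≥0) : ℝ := max 0 (min 1 (1 + ((k:ℝ)+1) * ((a:ℝ) - (x:ℝ))))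

lemma ramp_nonneg (k : ℕ) (a x : ℝ≥0) : 0 ≤ ramp k a x := le_max_left _ _

lemma ramp_le_one (k : ℕ) (a x : ℝ≥0) : ramp k a x ≤ 1 :=
  max_le zero_le_one (min_le_left _ _)

lemma ramp_continuous (k : ℕ) (a : ℝ≥0) : Continuous fun x : ℝ≥0 => ramp k a x :=
  continuous_const.max (continuous_const.min
    (continuous_const.add (continuous_const.mul
      (continuous_const.sub NNReal.continuous_coe))))

lemma ramp_of_le {k : ℕ} {a x : ℝ≥0} (h : x ≤ a) : ramp k a x = 1 := by
  have hxa : (x:ℝ) ≤ (a:ℝ) := NNReal.coe_le_coe.2 h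
  have h1 : (1:ℝ) ≤ 1 + ((k:ℝ)+1) * ((a:ℝ) - (x:ℝ)) := by nlinarith
  rw [ramp, min_eq_left h1, max_eq_right zero_le_one]

lemma ramp_eventually_zero {a x : ℝ≥0} (h : a < x) :
    ∀ᶠ k in Filter.atTop, ramp k a x = 0 := by
  have hd : (0:ℝ) < (x:ℝ) - (a:ℝ) := by
    have := NNReal.coe_lt_coe.2 h; linarith
  obtain ⟨K, hK⟩ := exists_nat_ge (1/((x:ℝ)-(a:ℝ)))
  refine Filter.eventually_atTop.2 ⟨K, fun k hk => ?_⟩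
  have hkK : (K:ℝ) ≤ (k:ℝ)+1 := by
    have : (K:ℝ) ≤ (k:ℝ) := Nat.cast_le.mpr hk
    linarith
  have h2 : 1/((x:ℝ)-(a:ℝ)) ≤ (k:ℝ)+1 := le_trans hK hkK
  have h3 : 1 ≤ ((k:ℝ)+1) * ((x:ℝ)-(a:ℝ)) := by
    rw [div_le_iff₀ hd] at h2
    linarith
  have h1 : 1 + ((k:ℝ)+1) * ((a:ℝ) - (x:ℝ)) ≤ 0 := by nlinarith
  rw [ramp, max_eq_left ((min_le_right _ _).trans h1)]

lemma ramp_lip (k : ℕ) (a x x' : ℝ≥0) :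
    |ramp k a x - ramp k a x'| ≤ ((k:ℝ)+1) * |(x:ℝ) - (x':ℝ)| := by
  unfold ramp
  set p := 1 + ((k:ℝ)+1) * ((a:ℝ) - (x:ℝ)) with hp
  set q := 1 + ((k:ℝ)+1) * ((a:ℝ) - (x':ℝ)) with hq
  calc |max 0 (min 1 p) - max 0 (min 1 q)|
      = |max (min 1 p) 0 - max (min 1 q) 0| := by rw [max_comm 0 (min 1 p), max_comm 0 (min 1 q)]
    _ ≤ |min 1 p - min 1 q| := abs_max_sub_max_le_abs _ _ _
    _ ≤ max |1 - 1| |p - q| := abs_min_sub_min_le_max _ _ _ _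
    _ = |p - q| := by simp
    _ = ((k:ℝ)+1) * |(x:ℝ) - (x':ℝ)| := by
        have hpq : p - q = ((k:ℝ)+1) * ((x':ℝ) - (x:ℝ)) := by rw [hp, hq]; ring
        rw [hpq, abs_mul, abs_of_nonneg (by positivity : (0:ℝ) ≤ (k:ℝ)+1), abs_sub_comm]

lemma abs_prod_sub_prod_le {ι : Type*} (s : Finset ι) (f g : ι → ℝ)
    (hf0 : ∀ i, 0 ≤ f i) (hf1 : ∀ i, f i ≤ 1) (hg0 : ∀ i, 0 ≤ g i) (hg1 : ∀ i, g i ≤ 1) :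
    |(∏ i ∈ s, f i) - ∏ i ∈ s, g i| ≤ ∑ i ∈ s, |f i - g i| := by
  induction s using Finset.induction_on with
  | empty => simp
  | @insert a s ha ih =>
    rw [Finset.prod_insert ha, Finset.prod_insert ha, Finset.sum_insert ha]
    have hprodg0 : 0 ≤ ∏ i ∈ s, g i := Finset.prod_nonneg fun i _ => hg0 i
    have hprodg1 : ∏ i ∈ s, g i ≤ 1 := Finset.prod_le_one (fun i _ => hg0 i) (fun i _ => hg1 i)
    calc |f a * ∏ i ∈ s, f i - g a * ∏ i ∈ s, g i|
        = |f a * ((∏ i ∈ s, f i) - ∏ i ∈ s, g i) + (f a - g a) * ∏ i ∈ s, g i| := by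
          congr 1; ring
      _ ≤ |f a * ((∏ i ∈ s, f i) - ∏ i ∈ s, g i)| + |(f a - g a) * ∏ i ∈ s, g i| :=
          abs_add_le _ _
      _ ≤ 1 * |(∏ i ∈ s, f i) - ∏ i ∈ s, g i| + |f a - g a| * 1 := by
          rw [abs_mul, abs_mul]
          refine add_le_add (mul_le_mul_of_nonneg_right ?_ (abs_nonneg _))
            (mul_le_mul_of_nonneg_left ?_ (abs_nonneg _))
          · rw [abs_of_nonneg (hf0 a)]; exact hf1 a
          · rw [abs_of_nonneg hprodg0]; exact hprodg1
      _ ≤ |f a - g a| + ∑ i ∈ s, |f i - g i| := by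
          rw [one_mul, mul_one]
          rw [add_comm]
          exact add_le_add_right ih _

lemma shift_mk (a : ℝ) (m : ℕ) (x : Fin m → ℝ≥0) :
    shift a ⟨m, x⟩ = ⟨m, fun i => x i + Real.toNNReal a⟩ := rfl

lemma toNNReal_abs_sub (a b : ℝ) :
    |((Real.toNNReal a : ℝ≥0) : ℝ) - ((Real.toNNReal b : ℝ≥0) : ℝ)| ≤ |a - b| := by
  rw [Real.coe_toNNReal', Real.coe_toNNReal']
  exact abs_max_sub_max_le_abs a b 0

end MFModel
end


namespace MFModel

/-- **The mild-form equation extends to indicators of closed rectangles.**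
If `(ν_t)_{t≥0}` is a weakly continuous mild solution of the mean-field equation (for all
bounded continuous test functions) such that for every `s ≥ 0` and `1 ≤ n ≤ C` the
restriction of `ν_s` to `𝒰_n` is absolutely continuous with respect to Lebesgue measure,
then the mild-form equation also holds when the test function is the indicator of a
closed rectangle `{(n,l₁,…,l_n) : 0 ≤ l_i ≤ y_i ∀ i}`, for any `1 ≤ n ≤ C` and any
`y ∈ [0,∞)^n`, as well as when it is the indicator of `𝒰_0 = {0}`. -/
theorem mild_equation_for_rectangle_indicators
    (C d : ℕ) (hC : 1 ≤ C) (hd : 1 ≤ d) (lam : ℝ) (hlam : 0 < lam)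
    (β : ℝ≥0 → ℝ) (hβc : Continuous β) (hβnn : ∀ x, 0 ≤ β x) (hβb : ∃ M, ∀ x, β x ≤ M)
    (ν : ℝ → Measure SState) (hsol : IsMildSolution C d lam β ν)
    (hac : ∀ s ≥ (0 : ℝ), ∀ n, 1 ≤ n → n ≤ C →
      fiberReal (ν s) n ≪ (volume : Measure (Fin n → ℝ))) :
    (∀ n, 1 ≤ n → n ≤ C → ∀ y : Fin n → ℝ≥0,
      MildEq C d lam β ν
        (Set.indicator
          ((fun x : Fin n → ℝ≥0 => (⟨n, x⟩ : SState)) '' {x | ∀ i, x i ≤ y i})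
          (fun _ => (1 : ℝ)))) ∧
    MildEq C d lam β ν (Set.indicator (level 0) fun _ => (1 : ℝ)) := by

  obtain ⟨M₀, hM₀⟩ := hβb
  have hβ : ∀ x, |β x| ≤ max M₀ 0 := fun x => by
    rw [abs_of_nonneg (hβnn x)]
    exact le_max_of_le_left (hM₀ x)
  constructor
  · intro n hn1 hnC y
    refine mildEq_of_approx hsol hβc hβ _
      (fun k => extF n (fun x => ∏ i, ramp k (y i) (x i))) (fun k => ?_) (fun k u => ?_)
      (fun k => ?_) (fun u => ?_)
    · exact extF_continuous (continuous_finset_prod _ fun i _ =>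
        (ramp_continuous k (y i)).comp (continuous_apply i))
    · refine extF_abs_le zero_le_one (fun x => ?_) u
      rw [abs_of_nonneg (Finset.prod_nonneg fun i _ => ramp_nonneg _ _ _)]
      exact Finset.prod_le_one (fun i _ => ramp_nonneg _ _ _) (fun i _ => ramp_le_one _ _ _)
    · refine ⟨(n:ℝ) * ((k:ℝ)+1), by positivity, fun a b u => ?_⟩
      rcases u with ⟨m, x⟩
      by_cases h : n = m
      · subst h
        simp only [shift_mk, extF_mk_eq]
        calc |(∏ i, ramp k (y i) (x i + Real.toNNReal a))
              - ∏ i, ramp k (y i) (x i + Real.toNNReal b)|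
            ≤ ∑ i : Fin n, |ramp k (y i) (x i + Real.toNNReal a)
              - ramp k (y i) (x i + Real.toNNReal b)| :=
              abs_prod_sub_prod_le _ _ _ (fun i => ramp_nonneg _ _ _) (fun i => ramp_le_one _ _ _)
                (fun i => ramp_nonneg _ _ _) (fun i => ramp_le_one _ _ _)
          _ ≤ ∑ _i : Fin n, ((k:ℝ)+1) * |a - b| := by
              refine Finset.sum_le_sum fun i _ => ?_
              refine (ramp_lip k (y i) _ _).trans ?_
              refine mul_le_mul_of_nonneg_left ?_ (by positivity)
              have hc : ((x i + Real.toNNReal a : ℝ≥0) : ℝ) - ((x i + Real.toNNReal b : ℝ≥0) : ℝ)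
                  = ((Real.toNNReal a : ℝ≥0) : ℝ) - ((Real.toNNReal b : ℝ≥0) : ℝ) := by
                push_cast
                ring
              rw [hc]
              exact toNNReal_abs_sub a b
          _ = (n:ℝ) * ((k:ℝ)+1) * |a - b| := by
              rw [Finset.sum_const, Finset.card_univ, Fintype.card_fin, nsmul_eq_mul]
              ring
      · simp only [shift_mk, extF_mk_ne (fun hh => h hh.symm), sub_self, abs_zero]
        positivity
    · rcases u with ⟨m, x⟩
      by_cases h : n = m
      · subst h
        simp only [extF_mk_eq]
        by_cases hx : ∀ i, x i ≤ y i
        · have hval : ∀ k : ℕ, (∏ i, ramp k (y i) (x i)) = 1 := fun k =>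
            Finset.prod_eq_one fun i _ => ramp_of_le (hx i)
          have hiA : Set.indicator
              ((fun x : Fin n → ℝ≥0 => (⟨n, x⟩ : SState)) '' {x | ∀ i, x i ≤ y i})
              (fun _ => (1:ℝ)) ⟨n, x⟩ = 1 := Set.indicator_of_mem (Set.mem_image_of_mem _ (show x ∈ {x | ∀ i, x i ≤ y i} from hx)) _
          rw [hiA]
          exact Filter.Tendsto.congr (fun k => (hval k).symm) tendsto_const_nhds
        · push_neg at hx
          obtain ⟨i₀, hi₀⟩ := hx
          have hev : ∀ᶠ k in Filter.atTop, (∏ i, ramp k (y i) (x i)) = 0 :=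
            (ramp_eventually_zero hi₀).mono fun k hk =>
              Finset.prod_eq_zero (Finset.mem_univ i₀) hk
          have hnm : (⟨n, x⟩ : SState) ∉
              (fun x : Fin n → ℝ≥0 => (⟨n, x⟩ : SState)) '' {x | ∀ i, x i ≤ y i} := by
            rintro ⟨x', hx', he⟩
            have hxx : x' = x := smk_injective n he
            subst hxx
            exact absurd (hx' i₀) (not_le.mpr hi₀)
          have hiA : Set.indicator
              ((fun x : Fin n → ℝ≥0 => (⟨n, x⟩ : SState)) '' {x | ∀ i, x i ≤ y i})
              (fun _ => (1:ℝ)) ⟨n, x⟩ = 0 := Set.indicator_of_notMem hnm _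
          rw [hiA]
          exact Filter.Tendsto.congr' (hev.mono fun k hk => hk.symm) tendsto_const_nhds
      · simp only [extF_mk_ne (fun hh => h hh.symm)]
        have hnm : (⟨m, x⟩ : SState) ∉
            (fun x : Fin n → ℝ≥0 => (⟨n, x⟩ : SState)) '' {x | ∀ i, x i ≤ y i} := by
          rintro ⟨x', _, he⟩
          exact h (congrArg Sigma.fst he)
        have hiA : Set.indicator
            ((fun x : Fin n → ℝ≥0 => (⟨n, x⟩ : SState)) '' {x | ∀ i, x i ≤ y i})
            (fun _ => (1:ℝ)) ⟨m, x⟩ = 0 := Set.indicator_of_notMem hnm _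
        rw [hiA]
        exact tendsto_const_nhds
  · refine mildEq_of_approx hsol hβc hβ _
      (fun _ => Set.indicator (level 0) (fun _ => (1:ℝ))) (fun k => ?_) (fun k u => ?_)
      (fun k => ?_) (fun u => tendsto_const_nhds)
    · rw [← extF_one_eq_indicator]
      exact extF_continuous continuous_const
    · rw [← extF_one_eq_indicator]
      exact extF_abs_le zero_le_one (fun _ => by simp) u
    · refine ⟨0, le_rfl, fun a b u => ?_⟩
      have hm : ∀ c : ℝ, Set.indicator (level 0) (fun _ => (1:ℝ)) (shift c u)
          = Set.indicator (level 0) (fun _ => (1:ℝ)) u := by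
        intro c
        by_cases h : u.1 = 0
        · rw [Set.indicator_of_mem (show shift c u ∈ level 0 from h),
            Set.indicator_of_mem (show u ∈ level 0 from h)]
        · rw [Set.indicator_of_notMem (show shift c u ∉ level 0 from h),
            Set.indicator_of_notMem (show u ∉ level 0 from h)]
      simp only [hm a, hm b, sub_self, abs_zero, zero_mul]
      exact le_rfl

end MFModel
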